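/- The solution of the linear delayed ODE z'(t) + k₁ z(t) = k₂ z(t-r) for t > 0 with initial data z(s) = z₀(s) on [-r,0] (z₀ ∈ C¹) is given by z(t) = e^{-k₁(t+r)} e_r^{\bar k₂ t} z₀(-r) + ∫_{-r}^0 e^{-k₁(t-s)} e_r^{\bar k₂(t-r-s)} [z₀'(s) + k₁ z₀(s)] ds, where \bar k₂ = k₂ e^{k₁ r}. -/

import Mathlib

open Real MeasureTheory

noncomputable def delayedExp (r k : ℝ) (t : ℝ) : ℝ :=
  if t < -r then 0
  else if t < 0 then 1
  else ∑ j ∈ Finset.range (⌊t / r⌋.toNat + 2),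
    k ^ j * (t - ((j : ℝ) - 1) * r) ^ j / (Nat.factorial j)

noncomputable def dS (r K : ℝ) (n : ℕ) (t : ℝ) : ℝ :=
  ∑ j ∈ Finset.range n, K ^ j * (t - ((j : ℝ) - 1) * r) ^ j / (Nat.factorial j)

variable {r K : ℝ}

lemma dE_neg {t : ℝ} (h : t < -r) : delayedExp r K t = 0 := by
  simp [delayedExp, h]

lemma dE_lt_zero {t : ℝ} (hr : 0 < r) (h1 : -r ≤ t) (h2 : t < 0) : delayedExp r K t = 1 := by
  rw [delayedExp, if_neg (not_lt.2 h1), if_pos h2]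

lemma dE_eq_dS {t : ℝ} (hr : 0 < r) (h0 : 0 ≤ t) :
    delayedExp r K t = dS r K (⌊t / r⌋.toNat + 2) t := by
  rw [delayedExp, if_neg, if_neg (not_lt.2 h0)]
  · rfl
  · push_neg; linarith

lemma floor_toNat_eq (hr : 0 < r) {n : ℕ} {t : ℝ} (h1 : n * r ≤ t) (h2 : t < (n+1) * r) :
    ⌊t / r⌋.toNat = n := by
  have : ⌊t / r⌋ = (n : ℤ) := by
    rw [Int.floor_eq_iff]
    constructor
    · push_cast; rw [le_div_iff₀ hr]; linarith
    · push_cast; rw [div_lt_iff₀ hr]; linarith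
  simp [this]

lemma dE_block (hr : 0 < r) {n : ℕ} {t : ℝ} (h1 : n * r ≤ t) (h2 : t ≤ (n+1) * r) :
    delayedExp r K t = dS r K (n+2) t := by
  have h0 : (0:ℝ) ≤ t := le_trans (by positivity) h1
  rcases lt_or_eq_of_le h2 with h2' | h2'
  · rw [dE_eq_dS hr h0, floor_toNat_eq hr h1 h2']
  · have hfl : ⌊t / r⌋.toNat = n + 1 := by
      apply floor_toNat_eq hr
      · push_cast; rw [← h2']
      · push_cast; nlinarith [hr]
    rw [dE_eq_dS hr h0, hfl]
    show dS r K ((n+2)+1) t = dS r K (n+2) t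
    rw [dS, Finset.sum_range_succ, ← dS]
    have : t - (((n+2:ℕ) : ℝ) - 1) * r = 0 := by push_cast; rw [h2']; ring
    rw [this, zero_pow (by omega)]
    simp

lemma dE_one (hr : 0 < r) {t : ℝ} (h1 : -r ≤ t) (h2 : t ≤ 0) : delayedExp r K t = 1 := by
  rcases lt_or_eq_of_le h2 with h2' | h2'
  · exact dE_lt_zero hr h1 h2'
  · subst h2'
    rw [dE_block hr (n := 0) (by simp) (by simpa using hr.le)]
    simp [dS, Finset.sum_range_succ]

lemma dS_cont (n : ℕ) : Continuous (dS r K n) := by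
  apply continuous_finset_sum
  intro j _
  fun_prop

lemma dS_hasDeriv (n : ℕ) (t : ℝ) :
    HasDerivAt (dS r K (n+2)) (K * dS r K (n+1) (t - r)) t := by
  have h : ∀ j : ℕ, HasDerivAt (fun t => K ^ j * (t - ((j : ℝ) - 1) * r) ^ j / (Nat.factorial j))
      (K ^ j * ((j:ℝ) * (t - ((j : ℝ) - 1) * r) ^ (j-1)) / (Nat.factorial j)) t := by
    intro j
    have h1 : HasDerivAt (fun t : ℝ => (t - ((j : ℝ) - 1) * r) ^ j)
        ((j:ℝ) * (t - ((j : ℝ) - 1) * r) ^ (j-1)) t := by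
      simpa [Function.comp_def] using ((hasDerivAt_pow j _).comp t ((hasDerivAt_id t).sub_const (((j : ℝ) - 1) * r)))
    simpa [mul_div_assoc] using (h1.const_mul (K ^ j)).div_const (Nat.factorial j)
  have hsum : HasDerivAt (dS r K (n+2))
      (∑ j ∈ Finset.range (n+2), K ^ j * ((j:ℝ) * (t - ((j : ℝ) - 1) * r) ^ (j-1)) / (Nat.factorial j)) t := by
    exact HasDerivAt.fun_sum (u := Finset.range (n+2)) (fun j _ => h j)
  convert hsum using 1
  rw [Finset.sum_range_succ', dS, Finset.mul_sum]
  simp only [Nat.cast_zero, zero_mul, mul_zero, zero_div, add_zero, Nat.cast_add, Nat.cast_one]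
  apply Finset.sum_congr rfl
  intro i _
  have hfact : ((Nat.factorial (i+1)) : ℝ) = ((i:ℝ)+1) * (Nat.factorial i) := by
    rw [Nat.factorial_succ]; push_cast; ring
  have hne : ((Nat.factorial i) : ℝ) ≠ 0 := by positivity
  push_cast
  rw [hfact]
  have : t - r - ((i:ℝ) - 1) * r = t - ((i:ℝ) + 1 - 1) * r := by ring
  rw [this]
  field_simp
  ring

lemma dE_shift (hr : 0 < r) {n : ℕ} {v : ℝ} (h1 : n * r ≤ v) (h2 : v ≤ (n+1) * r) :
    delayedExp r K (v - r) = dS r K (n+1) (v - r) := by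
  cases n with
  | zero =>
    have : dS r K 1 (v - r) = 1 := by simp [dS]
    rw [this]
    apply dE_one hr <;> simp at h1 h2 <;> linarith
  | succ m =>
    have h1' : (m : ℝ) * r ≤ v - r := by push_cast at h1 ⊢; linarith
    have h2' : v - r ≤ ((m:ℕ)+1) * r := by push_cast at h2 ⊢; linarith
    exact dE_block hr h1' h2'

lemma dE_cont (hr : 0 < r) : ContinuousOn (delayedExp r K) (Set.Ici (-r)) := by
  intro t ht
  rcases lt_or_ge t 0 with h2 | h2
  · have hEq : delayedExp r K =ᶠ[nhdsWithin t (Set.Ici (-r))] fun _ => (1:ℝ) := by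
      filter_upwards [nhdsWithin_le_nhds (Iio_mem_nhds h2), self_mem_nhdsWithin] with x hx hx'
      exact dE_lt_zero hr hx' hx
    exact ContinuousWithinAt.congr_of_eventuallyEq continuousWithinAt_const hEq
      (dE_lt_zero hr ht h2)
  · set n := ⌊t / r⌋.toNat with hn
    have h1 : (n:ℝ) * r ≤ t ∧ t < ((n:ℝ)+1) * r := by
      constructor
      · rw [hn]
        have h5 : ((⌊t / r⌋.toNat : ℤ) : ℝ) ≤ t / r := by
          rw [Int.toNat_of_nonneg (Int.floor_nonneg.2 (by positivity))]
          exact Int.floor_le _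
        calc ((⌊t / r⌋.toNat : ℕ) : ℝ) * r ≤ t / r * r := by
              apply mul_le_mul_of_nonneg_right _ hr.le
              exact_mod_cast h5
          _ = t := by field_simp
      · rw [hn]
        have h3 : t / r < (⌊t / r⌋.toNat : ℝ) + 1 := by
          have h6 := Int.lt_floor_add_one (t / r)
          have h4 : ((⌊t / r⌋ : ℤ) : ℝ) ≤ ((⌊t / r⌋.toNat : ℤ) : ℝ) := by
            exact_mod_cast Int.self_le_toNat _
          push_cast at h4 ⊢
          linarith
        calc t = t / r * r := by field_simp
          _ < ((⌊t / r⌋.toNat : ℝ)+1) * r := by exact mul_lt_mul_of_pos_right h3 hr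
    have keyL : Set.EqOn (delayedExp r K) (dS r K (n+1)) (Set.Icc ((n:ℝ)*r - r) ((n:ℝ)*r)) := by
      intro x hx
      have hb1 : (n:ℝ) * r ≤ x + r := by linarith [hx.1]
      have hb2 : x + r ≤ ((n:ℕ)+1 : ℝ) * r := by push_cast; linarith [hx.2]
      have := dE_shift (K := K) hr (n := n) (v := x + r) hb1 (by exact_mod_cast hb2)
      simpa using this
    have keyR : Set.EqOn (delayedExp r K) (dS r K (n+2)) (Set.Icc ((n:ℝ)*r) (((n:ℝ)+1)*r)) := by
      intro x hx
      exact dE_block hr hx.1 (by exact_mod_cast hx.2)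
    have hcL : ContinuousWithinAt (delayedExp r K) (Set.Icc ((n:ℝ)*r - r) ((n:ℝ)*r)) t := by
      rcases eq_or_lt_of_le h1.1 with he | hlt
      · have hmem : t ∈ Set.Icc ((n:ℝ)*r - r) ((n:ℝ)*r) := by
          constructor <;> [linarith [he]; linarith [he]]
        exact (((dS_cont (r := r) (K := K) (n+1)).continuousOn).congr keyL).continuousWithinAt hmem
      · apply continuousWithinAt_of_notMem_closure
        rw [closure_Icc]
        intro hmem
        exact absurd hmem.2 (not_le.2 hlt)
    have hcR : ContinuousWithinAt (delayedExp r K) (Set.Icc ((n:ℝ)*r) (((n:ℝ)+1)*r)) t := by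
      have hmem : t ∈ Set.Icc ((n:ℝ)*r) (((n:ℝ)+1)*r) := ⟨h1.1, h1.2.le⟩
      exact (((dS_cont (r := r) (K := K) (n+2)).continuousOn).congr keyR).continuousWithinAt hmem
    have hun := hcL.union hcR
    apply hun.mono_of_mem_nhdsWithin
    have hsub : Set.Ici (-r) ∩ Set.Ioo ((n:ℝ)*r - r) (((n:ℝ)+1)*r) ⊆
        Set.Icc ((n:ℝ)*r - r) ((n:ℝ)*r) ∪ Set.Icc ((n:ℝ)*r) (((n:ℝ)+1)*r) := by
      rintro x ⟨-, hx2⟩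
      rcases le_or_gt x ((n:ℝ)*r) with h | h
      · exact Or.inl ⟨hx2.1.le, h⟩
      · exact Or.inr ⟨h.le, hx2.2.le⟩
    apply Filter.mem_of_superset _ hsub
    apply Filter.inter_mem self_mem_nhdsWithin
    apply nhdsWithin_le_nhds
    apply Ioo_mem_nhds (by linarith [h1.1, hr]) h1.2

lemma dE_meas : Measurable (delayedExp r K) := by
  unfold delayedExp
  refine Measurable.ite (measurableSet_lt measurable_id measurable_const) measurable_const ?_
  refine Measurable.ite (measurableSet_lt measurable_id measurable_const) measurable_const ?_
  have h1 : Measurable (fun t : ℝ => (t, ⌊t / r⌋.toNat)) := by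
    apply Measurable.prodMk measurable_id
    exact (measurable_of_countable Int.toNat).comp ((measurable_id.div_const r).floor)
  have h2 : Measurable (fun p : ℝ × ℕ => dS r K (p.2 + 2) p.1) := by
    apply measurable_from_prod_countable_left
    intro n
    exact (dS_cont (n+2)).measurable
  exact h2.comp h1

lemma dE_bdd (hr : 0 < r) (M : ℝ) : ∃ C, 0 ≤ C ∧ ∀ x ≤ M, |delayedExp r K x| ≤ C := by
  obtain ⟨C, hC⟩ := (isCompact_Icc (a := -r) (b := max M (-r))).exists_bound_of_continuousOn
    ((dE_cont hr).mono (Set.Icc_subset_Ici_self))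
  refine ⟨max C 0, le_max_right _ _, fun x hx => ?_⟩
  rcases lt_or_ge x (-r) with h | h
  · rw [dE_neg h]; simpa using le_max_right C 0
  · have := hC x ⟨h, le_max_of_le_left hx⟩
    exact le_trans (by simpa using this) (le_max_left _ _)

-- new material

lemma dE_intgr_aux (hr : 0 < r) {a b : ℝ} (ha : -r ≤ a) (hab : a ≤ b) :
    IntervalIntegrable (fun v => delayedExp r K (v - r)) volume a b := by
  have contcase : ∀ c d : ℝ, 0 ≤ c → c ≤ d →
      IntervalIntegrable (fun v => delayedExp r K (v - r)) volume c d := by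
    intro c d hc hcd
    apply ContinuousOn.intervalIntegrable
    rw [Set.uIcc_of_le hcd]
    apply (dE_cont hr).comp (Continuous.continuousOn (by continuity))
    intro x hx
    simp only [Set.mem_Ici]
    linarith [hx.1]
  have zerocase : ∀ c d : ℝ, c ≤ d → d ≤ 0 →
      IntervalIntegrable (fun v => delayedExp r K (v - r)) volume c d := by
    intro c d hcd hd
    rw [intervalIntegrable_iff_integrableOn_Ioc_of_le hcd]
    have hae : ∀ᵐ x ∂(volume.restrict (Set.Ioc c d)), (0:ℝ) = delayedExp r K (x - r) := by
      have h0 : ∀ᵐ x ∂(volume : Measure ℝ), x ≠ (0:ℝ) := by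
        rw [ae_iff]
        have hset : {x : ℝ | ¬ x ≠ 0} = {0} := by ext x; simp
        rw [hset]
        exact Real.volume_singleton
      filter_upwards [ae_restrict_mem measurableSet_Ioc, ae_restrict_of_ae h0] with x hx hx0
      rw [dE_neg]
      rcases lt_or_eq_of_le (le_trans hx.2 hd) with h | h
      · linarith
      · exact absurd h hx0
    exact (integrable_zero _ _ _).congr hae
  rcases le_or_gt b 0 with h | h
  · exact zerocase a b hab h
  rcases le_or_gt 0 a with h2 | h2
  · exact contcase a b h2 hab
  · exact (zerocase a 0 h2.le le_rfl).trans (contcase 0 b le_rfl h.le)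

lemma dE_intgr (hr : 0 < r) {a b : ℝ} (ha : -r ≤ a) (hb : -r ≤ b) :
    IntervalIntegrable (fun v => K * delayedExp r K (v - r)) volume a b := by
  rcases le_total a b with h | h
  · exact (dE_intgr_aux hr ha h).const_mul K
  · exact ((dE_intgr_aux hr hb h).const_mul K).symm

lemma dE_FTC_block (hr : 0 < r) {n : ℕ} {a b : ℝ} (h1 : n * r ≤ a) (hab : a ≤ b)
    (h2 : b ≤ (n+1) * r) :
    ∫ v in a..b, K * delayedExp r K (v - r) = delayedExp r K b - delayedExp r K a := by
  have heq : Set.EqOn (fun v => K * delayedExp r K (v - r))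
      (fun v => K * dS r K (n+1) (v - r)) (Set.uIcc a b) := by
    rw [Set.uIcc_of_le hab]
    intro x hx
    simp only []
    rw [dE_shift hr (le_trans h1 hx.1) (le_trans hx.2 h2)]
  rw [intervalIntegral.integral_congr heq]
  have hderiv : ∀ v ∈ Set.uIcc a b, HasDerivAt (dS r K (n+2)) (K * dS r K (n+1) (v - r)) v :=
    fun v _ => dS_hasDeriv n v
  rw [intervalIntegral.integral_eq_sub_of_hasDerivAt hderiv
    (Continuous.intervalIntegrable (by have := dS_cont (r := r) (K := K) (n+1); continuity) _ _)]
  rw [← dE_block hr h1 (le_trans hab h2), ← dE_block hr (le_trans h1 hab) h2]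

lemma dE_FTC_neg (hr : 0 < r) {a b : ℝ} (ha : -r ≤ a) (hab : a ≤ b) (hb : b ≤ 0) :
    ∫ v in a..b, K * delayedExp r K (v - r) = delayedExp r K b - delayedExp r K a := by
  rw [dE_one hr (le_trans ha hab) hb, dE_one hr ha (le_trans hab hb), sub_self]
  rw [intervalIntegral.integral_of_le hab, MeasureTheory.integral_Ioc_eq_integral_Ioo]
  rw [MeasureTheory.setIntegral_congr_fun measurableSet_Ioo (g := fun _ => (0:ℝ))]
  · simp
  · intro x hx
    show K * delayedExp r K (x - r) = 0
    rw [dE_neg (by linarith [hx.2] : x - r < -r), mul_zero]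

lemma dE_FTC0 (hr : 0 < r) (n : ℕ) : ∀ t, -r ≤ t → t ≤ n * r →
    ∫ v in (-r)..t, K * delayedExp r K (v - r) = delayedExp r K t - 1 := by
  induction n with
  | zero =>
    intro t ht h0
    simp only [Nat.cast_zero, zero_mul] at h0
    rw [dE_FTC_neg hr le_rfl ht h0, dE_one hr (le_refl (-r)) (by linarith : -r ≤ (0:ℝ))]
  | succ n ih =>
    intro t ht h1
    rcases le_or_gt t ((n:ℝ) * r) with h | h
    · exact ih t ht h
    · have h0 : (0:ℝ) ≤ (n:ℝ) * r := by positivity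
      rw [← intervalIntegral.integral_add_adjacent_intervals (b := (n:ℝ)*r)
        (dE_intgr hr le_rfl (by linarith)) (dE_intgr hr (by linarith) (by linarith))]
      rw [ih ((n:ℝ)*r) (by linarith) le_rfl]
      rw [dE_FTC_block hr le_rfl h.le (by push_cast at h1 ⊢; linarith)]
      ring

lemma dE_FTC_gen (hr : 0 < r) {a b : ℝ} (ha : -r ≤ a) (hb : -r ≤ b) :
    ∫ v in a..b, K * delayedExp r K (v - r) = delayedExp r K b - delayedExp r K a := by
  have hex : ∀ x : ℝ, ∃ n : ℕ, x ≤ n * r := by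
    intro x
    refine ⟨⌈x / r⌉₊, ?_⟩
    calc x = x / r * r := by field_simp
      _ ≤ (⌈x / r⌉₊ : ℝ) * r := mul_le_mul_of_nonneg_right (Nat.le_ceil _) hr.le
  obtain ⟨na, hna⟩ := hex a
  obtain ⟨nb, hnb⟩ := hex b
  set n := max na nb with hn
  have h1 := dE_FTC0 (K := K) hr n a ha (le_trans hna (by
    apply mul_le_mul_of_nonneg_right _ hr.le
    exact_mod_cast le_max_left na nb))
  have h2 := dE_FTC0 (K := K) hr n b hb (le_trans hnb (by
    apply mul_le_mul_of_nonneg_right _ hr.le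
    exact_mod_cast le_max_right na nb))
  have hadj := intervalIntegral.integral_add_adjacent_intervals
    (dE_intgr (K := K) hr le_rfl ha) (dE_intgr (K := K) hr ha hb)
  rw [h1, h2] at hadj
  linarith

-- chunk 3

noncomputable def wfun (r k₁ k₂ : ℝ) (z₀ : ℝ → ℝ) (x : ℝ) : ℝ :=
  Real.exp (-k₁ * (x + r)) * delayedExp r (k₂ * Real.exp (k₁ * r)) x * z₀ (-r) +
  ∫ s in (-r)..(0 : ℝ), Real.exp (-k₁ * (x - s)) *
    delayedExp r (k₂ * Real.exp (k₁ * r)) (x - r - s) *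
    (deriv z₀ s + k₁ * z₀ s)

variable {k₁ k₂ : ℝ} {z₀ : ℝ → ℝ}

lemma g_cont (hz₀ : ContDiff ℝ 1 z₀) : Continuous (fun s => deriv z₀ s + k₁ * z₀ s) := by
  have h1 : Continuous (deriv z₀) := hz₀.continuous_deriv le_rfl
  have h2 : Continuous z₀ := hz₀.continuous
  fun_prop

lemma ez_hasDeriv (hz₀ : ContDiff ℝ 1 z₀) (s : ℝ) :
    HasDerivAt (fun u => Real.exp (k₁ * u) * z₀ u)
      (Real.exp (k₁ * s) * (deriv z₀ s + k₁ * z₀ s)) s := by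
  have h1 : HasDerivAt (fun u : ℝ => Real.exp (k₁ * u)) (Real.exp (k₁ * s) * k₁) s := by
    simpa using (HasDerivAt.exp ((hasDerivAt_id s).const_mul k₁))
  have h2 : HasDerivAt z₀ (deriv z₀ s) s :=
    ((hz₀.differentiable one_ne_zero) s).hasDerivAt
  have := h1.fun_mul h2
  exact this.congr_deriv (by ring)

lemma w_init (hr : 0 < r) (hz₀ : ContDiff ℝ 1 z₀) {x : ℝ} (h1 : -r ≤ x) (h2 : x ≤ 0) :
    wfun r k₁ k₂ z₀ x = z₀ x := by
  set K := k₂ * Real.exp (k₁ * r) with hK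
  set g : ℝ → ℝ := fun s => deriv z₀ s + k₁ * z₀ s with hg
  have hgc : Continuous g := g_cont hz₀
  rw [wfun]
  have hE1 : delayedExp r K x = 1 := dE_one hr h1 h2
  -- split the integral at x
  have hint1 : IntervalIntegrable
      (fun s => Real.exp (-k₁ * (x - s)) * delayedExp r K (x - r - s) * g s) volume (-r) x := by
    apply ContinuousOn.intervalIntegrable
    rw [Set.uIcc_of_le h1]
    have heq : Set.EqOn (fun s => Real.exp (-k₁ * (x - s)) * delayedExp r K (x - r - s) * g s)
        (fun s => Real.exp (-k₁ * (x - s)) * 1 * g s) (Set.Icc (-r) x) := by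
      intro s hs
      simp only []
      rw [dE_one hr (by linarith [hs.2] : -r ≤ x - r - s) (by linarith [hs.1] : x - r - s ≤ 0)]
    exact (Continuous.continuousOn (by fun_prop)).congr heq
  have hint2 : IntervalIntegrable
      (fun s => Real.exp (-k₁ * (x - s)) * delayedExp r K (x - r - s) * g s) volume x 0 := by
    rw [intervalIntegrable_iff_integrableOn_Ioc_of_le h2]
    have hae : ∀ᵐ s ∂(volume.restrict (Set.Ioc x 0)), (0:ℝ) =
        Real.exp (-k₁ * (x - s)) * delayedExp r K (x - r - s) * g s := by
      filter_upwards [ae_restrict_mem measurableSet_Ioc] with s hs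
      rw [dE_neg (by linarith [hs.1] : x - r - s < -r)]
      ring
    exact (integrable_zero _ _ _).congr hae
  rw [← intervalIntegral.integral_add_adjacent_intervals hint1 hint2]
  have hz : ∫ s in x..(0:ℝ), Real.exp (-k₁ * (x - s)) * delayedExp r K (x - r - s) * g s = 0 := by
    rw [intervalIntegral.integral_of_le h2]
    rw [MeasureTheory.integral_Ioc_eq_integral_Ioo]
    rw [MeasureTheory.setIntegral_congr_fun measurableSet_Ioo (g := fun _ => (0:ℝ))]
    · simp
    · intro s hs
      show Real.exp (-k₁ * (x - s)) * delayedExp r K (x - r - s) * g s = 0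
      rw [dE_neg (by linarith [hs.1] : x - r - s < -r)]
      ring
  have hfirst : ∫ s in (-r)..x, Real.exp (-k₁ * (x - s)) * delayedExp r K (x - r - s) * g s
      = Real.exp (-k₁ * x) * ∫ s in (-r)..x, Real.exp (k₁ * s) * g s := by
    rw [← intervalIntegral.integral_const_mul]
    apply intervalIntegral.integral_congr
    intro s hs
    rw [Set.uIcc_of_le h1] at hs
    show Real.exp (-k₁ * (x - s)) * delayedExp r K (x - r - s) * g s
      = Real.exp (-k₁ * x) * (Real.exp (k₁ * s) * g s)
    rw [dE_one hr (by linarith [hs.2] : -r ≤ x - r - s) (by linarith [hs.1] : x - r - s ≤ 0)]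
    have hh : Real.exp (-k₁ * x) * Real.exp (k₁ * s) = Real.exp (-k₁ * (x - s)) := by
      rw [← Real.exp_add]; congr 1; ring
    linear_combination g s * hh.symm
  have hFTC : ∫ s in (-r)..x, Real.exp (k₁ * s) * g s
      = Real.exp (k₁ * x) * z₀ x - Real.exp (k₁ * (-r)) * z₀ (-r) := by
    apply intervalIntegral.integral_eq_sub_of_hasDerivAt
    · exact fun s _ => ez_hasDeriv hz₀ s
    · apply ContinuousOn.intervalIntegrable
      exact Continuous.continuousOn (by fun_prop)
  rw [hz, hfirst, hFTC, hE1, add_zero]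
  have hh1 : Real.exp (-k₁ * x) * Real.exp (k₁ * x) = 1 := by
    rw [← Real.exp_add]; norm_num
  have hh2 : Real.exp (-k₁ * (x + r)) = Real.exp (-k₁ * x) * Real.exp (k₁ * (-r)) := by
    rw [← Real.exp_add]; congr 1; ring
  rw [hh2]
  linear_combination (z₀ x) * hh1

lemma w_eq (hr : 0 < r) (hz₀ : ContDiff ℝ 1 z₀) {t : ℝ} (ht : 0 ≤ t) :
    Real.exp (k₁ * t) * wfun r k₁ k₂ z₀ t = wfun r k₁ k₂ z₀ 0 +
      k₂ * ∫ u in (0:ℝ)..t, Real.exp (k₁ * u) * wfun r k₁ k₂ z₀ (u - r) := by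
  set K := k₂ * Real.exp (k₁ * r) with hK
  set g : ℝ → ℝ := fun s => deriv z₀ s + k₁ * z₀ s with hg
  have hgc : Continuous g := g_cont hz₀
  set c := z₀ (-r) with hc
  set E := delayedExp r K with hE
  have hrn : -r ≤ (0:ℝ) := by linarith
  have hEc : ContinuousOn E (Set.Ici (-r)) := dE_cont hr
  -- continuity-based integrability of s-integrands
  have hsint : ∀ x : ℝ, -r ≤ x → IntervalIntegrable
      (fun s => Real.exp (k₁ * s) * (g s * E (x - s))) volume (-r) 0 := by
    intro x hx
    apply ContinuousOn.intervalIntegrable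
    rw [Set.uIcc_of_le hrn]
    apply ContinuousOn.mul (Continuous.continuousOn (by fun_prop))
    apply ContinuousOn.mul (hgc.continuousOn)
    apply hEc.comp (Continuous.continuousOn (by fun_prop))
    intro s hs
    simp only [Set.mem_Ici]
    linarith [hs.2]
  -- LHS equation
  have eqL : Real.exp (k₁ * t) * wfun r k₁ k₂ z₀ t
      = Real.exp (-(k₁ * r)) * E t * c
        + ∫ s in (-r)..(0:ℝ), Real.exp (k₁ * s) * (g s * E (t - r - s)) := by
    rw [wfun, mul_add]
    congr 1
    · have hh : Real.exp (k₁ * t) * Real.exp (-k₁ * (t + r)) = Real.exp (-(k₁ * r)) := by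
        rw [← Real.exp_add]; congr 1; ring
      show Real.exp (k₁ * t) * (Real.exp (-k₁ * (t + r)) * E t * c) = _
      linear_combination (E t * c) * hh
    · rw [← intervalIntegral.integral_const_mul]
      apply intervalIntegral.integral_congr
      intro s hs
      show Real.exp (k₁ * t) * (Real.exp (-k₁ * (t - s)) * E (t - r - s) * g s)
        = Real.exp (k₁ * s) * (g s * E (t - r - s))
      have hh : Real.exp (k₁ * t) * Real.exp (-k₁ * (t - s)) = Real.exp (k₁ * s) := by
        rw [← Real.exp_add]; congr 1; ring
      linear_combination (E (t - r - s) * g s) * hh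
  -- w 0 equation
  have eqR0 : wfun r k₁ k₂ z₀ 0
      = Real.exp (-(k₁ * r)) * c
        + ∫ s in (-r)..(0:ℝ), Real.exp (k₁ * s) * (g s * E (-r - s)) := by
    rw [wfun]
    congr 1
    · rw [dE_one hr hrn le_rfl]
      have : -k₁ * ((0:ℝ) + r) = -(k₁ * r) := by ring
      rw [this, mul_one]
    · apply intervalIntegral.integral_congr
      intro s hs
      show Real.exp (-k₁ * (0 - s)) * E (0 - r - s) * g s
        = Real.exp (k₁ * s) * (g s * E (-r - s))
      have h1 : -k₁ * ((0:ℝ) - s) = k₁ * s := by ring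
      have h2 : (0:ℝ) - r - s = -r - s := by ring
      rw [h1, h2]
      ring
  -- the delayed-kernel part of exp (k₁ u) * w (u - r)
  set Bf : ℝ → ℝ := fun u => ∫ s in (-r)..(0:ℝ),
      Real.exp (k₁ * (r + s)) * (E (u - r - r - s) * g s) with hBf_def
  have stepA : ∀ u : ℝ, Real.exp (k₁ * u) * wfun r k₁ k₂ z₀ (u - r)
      = E (u - r) * c + Bf u := by
    intro u
    rw [wfun, mul_add]
    congr 1
    · have hh : Real.exp (k₁ * u) * Real.exp (-k₁ * (u - r + r)) = 1 := by
        rw [← Real.exp_add]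
        have : k₁ * u + -k₁ * (u - r + r) = 0 := by ring
        rw [this, Real.exp_zero]
      show Real.exp (k₁ * u) * (Real.exp (-k₁ * (u - r + r)) * E (u - r) * c) = E (u - r) * c
      linear_combination (E (u - r) * c) * hh
    · rw [hBf_def, ← intervalIntegral.integral_const_mul]
      apply intervalIntegral.integral_congr
      intro s hs
      show Real.exp (k₁ * u) * (Real.exp (-k₁ * (u - r - s)) * E (u - r - r - s) * g s)
        = Real.exp (k₁ * (r + s)) * (E (u - r - r - s) * g s)
      have hh : Real.exp (k₁ * u) * Real.exp (-k₁ * (u - r - s)) = Real.exp (k₁ * (r + s)) := by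
        rw [← Real.exp_add]; congr 1; ring
      linear_combination (E (u - r - r - s) * g s) * hh
  -- 2D integrability
  set F : ℝ × ℝ → ℝ := fun p => Real.exp (k₁ * (r + p.2)) * (E (p.1 - r - r - p.2) * g p.2)
    with hF_def
  have hFmeas : Measurable F := by
    apply Measurable.mul
    · exact (Real.continuous_exp.comp (by fun_prop)).measurable
    · apply Measurable.mul
      · exact dE_meas.comp (((measurable_fst.sub measurable_const).sub measurable_const).sub
          measurable_snd)
      · exact hgc.measurable.comp measurable_snd
  obtain ⟨CE, hCE0, hCE⟩ := dE_bdd (K := K) hr (t - r)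
  obtain ⟨Cg, hCg⟩ := (isCompact_Icc (a := -r) (b := (0:ℝ))).exists_bound_of_continuousOn
    hgc.continuousOn
  have hFint : MeasureTheory.Integrable F
      ((volume.restrict (Set.Ioc (0:ℝ) t)).prod (volume.restrict (Set.Ioc (-r) (0:ℝ)))) := by
    haveI h1 : IsFiniteMeasure (volume.restrict (Set.Ioc (0:ℝ) t)) :=
      ⟨by rw [Measure.restrict_apply_univ]; exact measure_Ioc_lt_top⟩
    haveI h2 : IsFiniteMeasure (volume.restrict (Set.Ioc (-r) (0:ℝ))) :=
      ⟨by rw [Measure.restrict_apply_univ]; exact measure_Ioc_lt_top⟩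
    apply MeasureTheory.Integrable.mono' (g := fun _ => Real.exp (|k₁| * r) * (CE * Cg))
      (integrable_const _) hFmeas.aestronglyMeasurable
    rw [Measure.prod_restrict]
    filter_upwards [ae_restrict_mem (measurableSet_Ioc.prod measurableSet_Ioc)] with p hp
    obtain ⟨hp1, hp2⟩ := hp
    have hb1 : Real.exp (k₁ * (r + p.2)) ≤ Real.exp (|k₁| * r) := by
      apply Real.exp_le_exp.2
      have h3 : (0:ℝ) ≤ r + p.2 := by linarith [hp2.1]
      have h4 : r + p.2 ≤ r := by linarith [hp2.2]
      calc k₁ * (r + p.2) ≤ |k₁| * (r + p.2) := by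
            apply mul_le_mul_of_nonneg_right (le_abs_self k₁) h3
        _ ≤ |k₁| * r := by apply mul_le_mul_of_nonneg_left h4 (abs_nonneg k₁)
    have hb2 : |E (p.1 - r - r - p.2)| ≤ CE := by
      apply hCE
      have := hp1.2
      have := hp2.1
      linarith
    have hb3 : |g p.2| ≤ Cg := by
      have := hCg p.2 ⟨hp2.1.le, hp2.2⟩
      simpa using this
    have hCg0 : 0 ≤ Cg := le_trans (abs_nonneg _) hb3
    show |F p| ≤ _
    rw [hF_def]
    simp only []
    rw [abs_mul, abs_mul, Real.abs_exp]
    have hb4 := mul_le_mul hb2 hb3 (abs_nonneg _) hCE0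
    exact mul_le_mul hb1 hb4 (by positivity) (Real.exp_pos _).le
  -- integrability of Bf on [0, t]
  have hBf_int : IntervalIntegrable Bf volume 0 t := by
    rw [intervalIntegrable_iff_integrableOn_Ioc_of_le ht]
    have h5 := hFint.integral_prod_left
    apply h5.congr
    filter_upwards with u
    rw [hBf_def]
    simp only []
    rw [intervalIntegral.integral_of_le hrn]
  have hA_int : IntervalIntegrable (fun u => E (u - r) * c) volume 0 t :=
    (dE_intgr_aux hr hrn ht).mul_const c
  -- Fubini swap
  have hswap : ∫ u in (0:ℝ)..t, Bf u
      = ∫ s in (-r)..(0:ℝ), ∫ u in (0:ℝ)..t, Real.exp (k₁ * (r + s)) * (E (u - r - r - s) * g s) := by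
    rw [intervalIntegral.integral_of_le ht, intervalIntegral.integral_of_le hrn]
    have hf2 : ∀ u, Bf u = ∫ s in Set.Ioc (-r) (0:ℝ), F (u, s) := by
      intro u
      rw [hBf_def]
      simp only []
      rw [intervalIntegral.integral_of_le hrn]
    simp only [hf2]
    have := MeasureTheory.integral_integral_swap (f := fun u s => F (u, s))
      (μ := volume.restrict (Set.Ioc (0:ℝ) t)) (ν := volume.restrict (Set.Ioc (-r) (0:ℝ)))
      (by exact hFint)
    rw [this]
    apply MeasureTheory.setIntegral_congr_fun measurableSet_Ioc
    intro s hs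
    show (∫ x in Set.Ioc (0:ℝ) t, F (x, s))
      = ∫ u in (0:ℝ)..t, Real.exp (k₁ * (r + s)) * (E (u - r - r - s) * g s)
    rw [intervalIntegral.integral_of_le ht]
  -- inner u-integral values
  have hKJ : ∀ s ∈ Set.uIcc (-r) (0:ℝ),
      K * ∫ u in (0:ℝ)..t, E (u - r - r - s) = E (t - r - s) - E (-r - s) := by
    intro s hs
    rw [Set.uIcc_of_le hrn] at hs
    simp only [hE]
    have harg : (fun u : ℝ => delayedExp r K (u - r - r - s))
        = fun u => delayedExp r K ((u - (r + s)) - r) := by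
      funext u; congr 1; ring
    rw [harg]
    rw [intervalIntegral.integral_comp_sub_right (fun v => delayedExp r K (v - r)) (r + s)]
    rw [← intervalIntegral.integral_const_mul]
    rw [dE_FTC_gen hr (by linarith [hs.2] : -r ≤ 0 - (r + s))
      (by linarith [hs.2] : -r ≤ t - (r + s))]
    have e1 : t - (r + s) = t - r - s := by ring
    have e2 : (0:ℝ) - (r + s) = -r - s := by ring
    rw [e1, e2]
  have hJA : K * ∫ u in (0:ℝ)..t, E (u - r) = E t - 1 := by
    simp only [hE]
    rw [← intervalIntegral.integral_const_mul]
    rw [dE_FTC_gen hr hrn (by linarith : -r ≤ t)]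
    rw [dE_one hr hrn le_rfl]
  -- pulling constants out of the inner integral
  have hswap2 : ∫ u in (0:ℝ)..t, Bf u
      = ∫ s in (-r)..(0:ℝ), Real.exp (k₁ * (r + s))
          * ((∫ u in (0:ℝ)..t, E (u - r - r - s)) * g s) := by
    rw [hswap]
    apply intervalIntegral.integral_congr
    intro s hs
    show ∫ u in (0:ℝ)..t, Real.exp (k₁ * (r + s)) * (E (u - r - r - s) * g s) = _
    rw [intervalIntegral.integral_const_mul]
    congr 1
    rw [intervalIntegral.integral_mul_const]
  -- total u-integral
  have hP : ∫ u in (0:ℝ)..t, Real.exp (k₁ * u) * wfun r k₁ k₂ z₀ (u - r)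
      = (∫ u in (0:ℝ)..t, E (u - r)) * c + ∫ u in (0:ℝ)..t, Bf u := by
    rw [← intervalIntegral.integral_mul_const, ← intervalIntegral.integral_add hA_int hBf_int]
    apply intervalIntegral.integral_congr
    intro u _
    simpa using stepA u
  -- algebra helpers
  have hexp1 : Real.exp (-(k₁ * r)) * Real.exp (k₁ * r) = 1 := by
    rw [← Real.exp_add]; norm_num
  have hA2 : k₂ * ((∫ u in (0:ℝ)..t, E (u - r)) * c)
      = Real.exp (-(k₁ * r)) * ((E t - 1) * c) := by
    rw [hK] at hJA
    linear_combination (-(k₂ * (∫ u in (0:ℝ)..t, E (u - r)) * c)) * hexp1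
      + (Real.exp (-(k₁ * r)) * c) * hJA
  have hB2 : k₂ * (∫ s in (-r)..(0:ℝ), Real.exp (k₁ * (r + s))
          * ((∫ u in (0:ℝ)..t, E (u - r - r - s)) * g s))
      = (∫ s in (-r)..(0:ℝ), Real.exp (k₁ * s) * (g s * E (t - r - s)))
        - ∫ s in (-r)..(0:ℝ), Real.exp (k₁ * s) * (g s * E (-r - s)) := by
    rw [← intervalIntegral.integral_const_mul]
    rw [← intervalIntegral.integral_sub (hsint (t - r) (by linarith)) (hsint (-r) le_rfl)]
    apply intervalIntegral.integral_congr
    intro s hs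
    show k₂ * (Real.exp (k₁ * (r + s)) * ((∫ u in (0:ℝ)..t, E (u - r - r - s)) * g s))
      = Real.exp (k₁ * s) * (g s * E (t - r - s)) - Real.exp (k₁ * s) * (g s * E (-r - s))
    have h1 : Real.exp (k₁ * (r + s)) = Real.exp (k₁ * r) * Real.exp (k₁ * s) := by
      rw [← Real.exp_add]; congr 1; ring
    have h2 := hKJ s hs
    rw [h1, hK] at *
    linear_combination (Real.exp (k₁ * s) * g s) * h2
      + (Real.exp (k₁ * s) * (∫ u in (0:ℝ)..t, E (u - r - r - s)) * g s)
        * (rfl : (k₂ * Real.exp (k₁ * r) : ℝ) = k₂ * Real.exp (k₁ * r))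
  rw [eqL, eqR0, hP, hswap2, mul_add, hA2, hB2]
  ring

lemma z_eq (hr : 0 < r) {z : ℝ → ℝ}
    (hcont : ContinuousOn z (Set.Ici (-r)))
    (hode : ∀ t > (0 : ℝ), HasDerivAt z (k₂ * z (t - r) - k₁ * z t) t)
    {t : ℝ} (ht : 0 ≤ t) :
    Real.exp (k₁ * t) * z t = z 0 + k₂ * ∫ u in (0:ℝ)..t, Real.exp (k₁ * u) * z (u - r) := by
  have hzc : ∀ a b : ℝ, -r ≤ a → ContinuousOn (fun u => z (u - r)) (Set.Icc a b) → True := fun _ _ _ _ => trivial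
  have hFTC : ∫ u in (0:ℝ)..t, Real.exp (k₁ * u) * (k₂ * z (u - r))
      = Real.exp (k₁ * t) * z t - Real.exp (k₁ * 0) * z 0 := by
    apply intervalIntegral.integral_eq_sub_of_hasDeriv_right_of_le ht
    · apply ContinuousOn.mul (Continuous.continuousOn (by fun_prop))
      apply hcont.mono
      intro x hx
      simp only [Set.mem_Ici] at *
      linarith [hx.1, hr]
    · intro u hu
      have h1 : HasDerivAt (fun u : ℝ => Real.exp (k₁ * u)) (Real.exp (k₁ * u) * k₁) u := by
        simpa using (HasDerivAt.exp ((hasDerivAt_id u).const_mul k₁))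
      have h2 := h1.fun_mul (hode u hu.1)
      have h3 : HasDerivAt (fun u => Real.exp (k₁ * u) * z u)
          (Real.exp (k₁ * u) * (k₂ * z (u - r))) u := by
        exact h2.congr_deriv (by ring)
      exact h3.hasDerivWithinAt
    · apply ContinuousOn.intervalIntegrable
      rw [Set.uIcc_of_le ht]
      apply ContinuousOn.mul (Continuous.continuousOn (by fun_prop))
      have hz2 : ContinuousOn (fun u => z (u - r)) (Set.Icc 0 t) := by
        apply hcont.comp (Continuous.continuousOn (by fun_prop))
        intro x hx
        simp only [Set.mem_Ici]
        linarith [hx.1]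
      exact fun x hx => ((continuousWithinAt_const).mul (hz2 x hx))
  have hpull : ∫ u in (0:ℝ)..t, Real.exp (k₁ * u) * (k₂ * z (u - r))
      = k₂ * ∫ u in (0:ℝ)..t, Real.exp (k₁ * u) * z (u - r) := by
    rw [← intervalIntegral.integral_const_mul]
    apply intervalIntegral.integral_congr
    intro u _
    show Real.exp (k₁ * u) * (k₂ * z (u - r)) = k₂ * (Real.exp (k₁ * u) * z (u - r))
    ring
  rw [hpull] at hFTC
  rw [mul_zero, Real.exp_zero, one_mul] at hFTC
  linarith [hFTC]

theorem stmt_5 (r k₁ k₂ : ℝ) (hr : 0 < r) (z₀ z : ℝ → ℝ)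
    (hz₀ : ContDiff ℝ 1 z₀)
    (hcont : ContinuousOn z (Set.Ici (-r)))
    (hinit : ∀ s ∈ Set.Icc (-r) (0 : ℝ), z s = z₀ s)
    (hode : ∀ t > (0 : ℝ), HasDerivAt z (k₂ * z (t - r) - k₁ * z t) t) :
    ∀ t > (0 : ℝ), z t =
      Real.exp (-k₁ * (t + r)) * delayedExp r (k₂ * Real.exp (k₁ * r)) t * z₀ (-r) +
      ∫ s in (-r)..(0 : ℝ), Real.exp (-k₁ * (t - s)) *
        delayedExp r (k₂ * Real.exp (k₁ * r)) (t - r - s) *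
        (deriv z₀ s + k₁ * z₀ s) := by
  intro t ht
  show z t = wfun r k₁ k₂ z₀ t
  have hzw0 : ∀ x, -r ≤ x → x ≤ 0 → z x = wfun r k₁ k₂ z₀ x := by
    intro x h1 h2
    rw [hinit x ⟨h1, h2⟩, w_init hr hz₀ h1 h2]
  have main : ∀ n : ℕ, ∀ x, -r ≤ x → x ≤ n * r → z x = wfun r k₁ k₂ z₀ x := by
    intro n
    induction n with
    | zero =>
      intro x h1 h2
      simp only [Nat.cast_zero, zero_mul] at h2
      exact hzw0 x h1 h2
    | succ n ih =>
      intro x h1 h2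
      rcases le_or_gt x ((n:ℝ) * r) with h | h
      · exact ih x h1 h
      · have hx0 : (0:ℝ) ≤ x := le_trans (by positivity) h.le
        have e1 := z_eq hr hcont hode hx0
        have e2 := w_eq (k₁ := k₁) (k₂ := k₂) hr hz₀ hx0
        have hint_eq : ∫ u in (0:ℝ)..x, Real.exp (k₁ * u) * z (u - r)
            = ∫ u in (0:ℝ)..x, Real.exp (k₁ * u) * wfun r k₁ k₂ z₀ (u - r) := by
          apply intervalIntegral.integral_congr
          intro u hu
          rw [Set.uIcc_of_le hx0] at hu
          have hur1 : -r ≤ u - r := by linarith [hu.1]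
          have hur2 : u - r ≤ (n:ℝ) * r := by
            have := hu.2
            push_cast at h2
            linarith
          show Real.exp (k₁ * u) * z (u - r) = Real.exp (k₁ * u) * wfun r k₁ k₂ z₀ (u - r)
          rw [ih (u - r) hur1 hur2]
        have hz0w0 : z 0 = wfun r k₁ k₂ z₀ 0 := hzw0 0 (by linarith) le_rfl
        have : Real.exp (k₁ * x) * z x = Real.exp (k₁ * x) * wfun r k₁ k₂ z₀ x := by
          rw [e1, e2, hint_eq, hz0w0]
        exact mul_left_cancel₀ (Real.exp_ne_zero _) this
  obtain ⟨n, hn⟩ : ∃ n : ℕ, t ≤ n * r := by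
    refine ⟨⌈t / r⌉₊, ?_⟩
    calc t = t / r * r := by field_simp
      _ ≤ (⌈t / r⌉₊ : ℝ) * r := mul_le_mul_of_nonneg_right (Nat.le_ceil _) hr.le
  exact main n t (by linarith) hn
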